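/- Let Ω, Ω₁, Ω₂ be nonempty closed convex subsets of ℝ² with Ω ∩ Ωᵢ = ∅ for i = 1, 2, let x̄ ∈ Ω, and suppose there is a vector a ≠ 0 such that N(x̄;Ω) = span{a}. Set aᵢ = (x̄ − Π(x̄;Ωᵢ))/d(x̄;Ωᵢ) for i = 1, 2. If either a₁ + a₂ = 0, or both a₁ ≠ a₂ and cos(a₁, a) = cos(a₂, a), then x̄ is an optimal solution of the generalized Heron problem with sets Ω₁, Ω₂, i.e., d(x̄;Ω₁) + d(x̄;Ω₂) ≤ d(x;Ω₁) + d(x;Ω₂) for all x ∈ Ω. -/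

import Mathlib

open Metric RealInnerProductSpace

section Aux
variable {E : Type*} [NormedAddCommGroup E] [InnerProductSpace ℝ E]

lemma heron_proj_inner_le {Ω₁ : Set E} (h1cv : Convex ℝ Ω₁)
    {xbar p : E} (hp : p ∈ Ω₁) (hd : dist xbar p = infDist xbar Ω₁) :
    ∀ w ∈ Ω₁, (inner ℝ (xbar - p) (w - p) : ℝ) ≤ 0 := by
  rw [← norm_eq_iInf_iff_real_inner_le_zero h1cv hp]
  rw [dist_eq_norm] at hd
  rw [hd, Metric.infDist_eq_iInf]
  simp_rw [dist_eq_norm]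

lemma heron_subgrad {Ω₁ : Set E} (h1ne : Ω₁.Nonempty) (h1cv : Convex ℝ Ω₁)
    {xbar p : E} (hp : p ∈ Ω₁) (hd : dist xbar p = infDist xbar Ω₁)
    (hdpos : 0 < infDist xbar Ω₁) (x : E) :
    infDist xbar Ω₁ + (inner ℝ ((infDist xbar Ω₁)⁻¹ • (xbar - p)) (x - xbar) : ℝ) ≤ infDist x Ω₁ := by
  set d := infDist xbar Ω₁ with hdef
  set a₁ : E := d⁻¹ • (xbar - p) with ha₁
  have hnorm : ‖xbar - p‖ = d := by rw [← dist_eq_norm]; exact hd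
  have hna : ‖a₁‖ = 1 := by
    rw [ha₁, norm_smul, hnorm, norm_inv, Real.norm_of_nonneg hdpos.le,
      inv_mul_cancel₀ hdpos.ne']
  have hinner : (inner ℝ (a₁) (xbar - p) : ℝ) = d := by
    rw [ha₁, real_inner_smul_left, real_inner_self_eq_norm_sq, hnorm]
    field_simp
  have hproj := heron_proj_inner_le h1cv hp hd
  rw [Metric.infDist_eq_iInf]
  haveI := h1ne.to_subtype
  apply le_ciInf
  intro ⟨y, hy⟩
  have h1 : (inner ℝ (a₁) (x - y) : ℝ) ≤ dist x y := by
    rw [dist_eq_norm]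
    calc (inner ℝ (a₁) (x - y) : ℝ) ≤ ‖a₁‖ * ‖x - y‖ := real_inner_le_norm _ _
      _ = ‖x - y‖ := by rw [hna, one_mul]
  have h2 : d + (inner ℝ (a₁) (x - xbar) : ℝ) ≤ (inner ℝ (a₁) (x - y) : ℝ) := by
    have hdecomp : (x : E) - y = (x - xbar) + (xbar - p) + (p - y) := by abel
    rw [hdecomp, inner_add_right, inner_add_right, hinner]
    have h3 : 0 ≤ (inner ℝ (a₁) (p - y) : ℝ) := by
      have := hproj y hy
      rw [ha₁, real_inner_smul_left]
      have h4 : (inner ℝ (xbar - p) (p - y) : ℝ) = -(inner ℝ (xbar - p) (y - p) : ℝ) := by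
        rw [← inner_neg_right]; congr 1; abel
      rw [h4]
      exact mul_nonneg (inv_nonneg.mpr hdpos.le) (by linarith)
    linarith
  linarith

end Aux


/-- Theorem 3.5(ii): in `ℝ²`, for the two-set generalized Heron problem with
`N(xbar; Ω) = span{a}`, `a ≠ 0`, if either `a₁ + a₂ = 0` or both `a₁ ≠ a₂` and
`cos(a₁, a) = cos(a₂, a)`, then `xbar` is an optimal solution, where
`aᵢ = (xbar - Π(xbar; Ωᵢ)) / d(xbar; Ωᵢ)`. -/
theorem heron_two_sets_sufficient_plane
    (Ω Ω₁ Ω₂ : Set (EuclideanSpace ℝ (Fin 2)))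
    (hΩne : Ω.Nonempty) (hΩcl : IsClosed Ω) (hΩcv : Convex ℝ Ω)
    (h1ne : Ω₁.Nonempty) (h1cl : IsClosed Ω₁) (h1cv : Convex ℝ Ω₁)
    (h2ne : Ω₂.Nonempty) (h2cl : IsClosed Ω₂) (h2cv : Convex ℝ Ω₂)
    (hdisj1 : Ω ∩ Ω₁ = ∅) (hdisj2 : Ω ∩ Ω₂ = ∅)
    (xbar : EuclideanSpace ℝ (Fin 2)) (hxbar : xbar ∈ Ω)
    (a : EuclideanSpace ℝ (Fin 2)) (hane : a ≠ 0)
    (hN : {v : EuclideanSpace ℝ (Fin 2) | ∀ x ∈ Ω, (inner ℝ v (x - xbar) : ℝ) ≤ 0}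
        = (Submodule.span ℝ {a} : Submodule ℝ (EuclideanSpace ℝ (Fin 2))))
    (p₁ p₂ : EuclideanSpace ℝ (Fin 2))
    (hp₁ : p₁ ∈ Ω₁ ∧ dist xbar p₁ = Metric.infDist xbar Ω₁)
    (hp₂ : p₂ ∈ Ω₂ ∧ dist xbar p₂ = Metric.infDist xbar Ω₂)
    (a₁ a₂ : EuclideanSpace ℝ (Fin 2))
    (ha₁ : a₁ = (Metric.infDist xbar Ω₁)⁻¹ • (xbar - p₁))
    (ha₂ : a₂ = (Metric.infDist xbar Ω₂)⁻¹ • (xbar - p₂))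
    (hyp : a₁ + a₂ = 0 ∨
      (a₁ ≠ a₂ ∧ (inner ℝ a₁ a : ℝ) / (‖a₁‖ * ‖a‖) = (inner ℝ a₂ a : ℝ) / (‖a₂‖ * ‖a‖))) :
    ∀ x ∈ Ω, Metric.infDist xbar Ω₁ + Metric.infDist xbar Ω₂ ≤
      Metric.infDist x Ω₁ + Metric.infDist x Ω₂ := by
  have hx1 : xbar ∉ Ω₁ := fun h => Set.eq_empty_iff_forall_notMem.mp hdisj1 xbar ⟨hxbar, h⟩
  have hx2 : xbar ∉ Ω₂ := fun h => Set.eq_empty_iff_forall_notMem.mp hdisj2 xbar ⟨hxbar, h⟩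
  have hd1 : 0 < infDist xbar Ω₁ := (h1cl.notMem_iff_infDist_pos h1ne).mp hx1
  have hd2 : 0 < infDist xbar Ω₂ := (h2cl.notMem_iff_infDist_pos h2ne).mp hx2
  have hn1 : ‖xbar - p₁‖ = infDist xbar Ω₁ := by rw [← dist_eq_norm]; exact hp₁.2
  have hn2 : ‖xbar - p₂‖ = infDist xbar Ω₂ := by rw [← dist_eq_norm]; exact hp₂.2
  have hna1 : ‖a₁‖ = 1 := by
    rw [ha₁, norm_smul, hn1, norm_inv, Real.norm_of_nonneg hd1.le,
      inv_mul_cancel₀ hd1.ne']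
  have hna2 : ‖a₂‖ = 1 := by
    rw [ha₂, norm_smul, hn2, norm_inv, Real.norm_of_nonneg hd2.le,
      inv_mul_cancel₀ hd2.ne']
  -- a₁ + a₂ ∈ span {a}
  have hmem : a₁ + a₂ ∈ (Submodule.span ℝ {a} : Submodule ℝ (EuclideanSpace ℝ (Fin 2))) := by
    rcases hyp with h0 | ⟨hne12, hcos⟩
    · rw [h0]; exact Submodule.zero_mem _
    · set u : EuclideanSpace ℝ (Fin 2) := a₁ - a₂ with hu
      have hune : u ≠ 0 := sub_ne_zero_of_ne hne12
      have hinnerua : (inner ℝ (u) (a) : ℝ) = 0 := by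
        have hna : ‖a‖ ≠ 0 := norm_ne_zero_iff.mpr hane
        rw [hna1, hna2, one_mul, div_eq_div_iff hna hna] at hcos
        have : ((inner ℝ (a₁) (a) : ℝ) : ℝ) = (inner ℝ (a₂) (a) : ℝ) := by
          exact mul_right_cancel₀ hna hcos
        rw [hu, inner_sub_left, this, sub_self]
      have hinnerus : (inner ℝ (u) (a₁ + a₂) : ℝ) = 0 := by
        rw [hu, inner_sub_left, inner_add_right, inner_add_right,
          real_inner_self_eq_norm_sq, real_inner_self_eq_norm_sq, hna1, hna2,
          real_inner_comm a₂ a₁]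
        ring
      set K := (Submodule.span ℝ {u} : Submodule ℝ (EuclideanSpace ℝ (Fin 2)))ᗮ with hK
      have hmemK : ∀ w : EuclideanSpace ℝ (Fin 2), (inner ℝ (u) (w) : ℝ) = 0 → w ∈ K := by
        intro w hw
        rw [hK, Submodule.mem_orthogonal]
        intro v hv
        obtain ⟨c, rfl⟩ := Submodule.mem_span_singleton.mp hv
        rw [real_inner_smul_left, hw, mul_zero]
      have haK : a ∈ K := hmemK a hinnerua
      have hsK : a₁ + a₂ ∈ K := hmemK _ hinnerus
      have hfinK : Module.finrank ℝ K = 1 := by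
        have h2 : Module.finrank ℝ (EuclideanSpace ℝ (Fin 2)) = 2 := by simp
        have := Submodule.finrank_add_finrank_orthogonal
          (Submodule.span ℝ {u} : Submodule ℝ (EuclideanSpace ℝ (Fin 2)))
        rw [finrank_span_singleton hune, h2] at this
        linarith
      have hle : (Submodule.span ℝ {a} : Submodule ℝ (EuclideanSpace ℝ (Fin 2))) ≤ K := by
        rw [Submodule.span_singleton_le_iff_mem]; exact haK
      have heq : (Submodule.span ℝ {a} : Submodule ℝ (EuclideanSpace ℝ (Fin 2))) = K :=
        Submodule.eq_of_le_of_finrank_eq hle (by rw [finrank_span_singleton hane, hfinK])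
      rw [heq]; exact hsK
  obtain ⟨c, hc⟩ := Submodule.mem_span_singleton.mp hmem
  have hnegmem : -(a₁ + a₂) ∈ (Submodule.span ℝ {a} : Submodule ℝ (EuclideanSpace ℝ (Fin 2))) :=
    Submodule.neg_mem _ hmem
  have hNmem : -(a₁ + a₂) ∈ {v : EuclideanSpace ℝ (Fin 2) |
      ∀ x ∈ Ω, (inner ℝ v (x - xbar) : ℝ) ≤ 0} := by
    rw [hN]; exact_mod_cast hnegmem
  intro x hx
  have hpos : 0 ≤ (inner ℝ (a₁ + a₂) (x - xbar) : ℝ) := by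
    have := hNmem x hx
    rw [inner_neg_left] at this
    linarith
  have hs1 := heron_subgrad h1ne h1cv hp₁.1 hp₁.2 hd1 x
  have hs2 := heron_subgrad h2ne h2cv hp₂.1 hp₂.2 hd2 x
  rw [← ha₁] at hs1
  rw [← ha₂] at hs2
  rw [inner_add_left] at hpos
  linarith
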